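/- Let A be a bounded operator on a Hilbert space H, B : E → H bounded with E finite-dimensional, X an invertible self-adjoint bounded operator on H, and σ₁ an invertible self-adjoint operator on E, satisfying the Lyapunov equation A X + X A* + B σ₁ B* = 0. Define S(λ) = I − B* X⁻¹ (λI − A)⁻¹ B σ₁ for λ outside the spectrum of A. Then for all λ, μ outside the spectrum of A, S(μ)* σ₁ S(λ) − σ₁ = −(μ̄ + λ) σ₁ B* (μ̄ I − A*)⁻¹ X⁻¹ (λ I − A)⁻¹ B σ₁. In particular S(−λ̄)* σ₁ S(λ) = σ₁. -/
import Mathlib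


open ContinuousLinearMap

/-- The transfer function `S(λ) = I − B* X⁻¹ (λI − A)⁻¹ B σ₁`. -/
noncomputable def transferFn {H E : Type*}
    [NormedAddCommGroup H] [InnerProductSpace ℂ H] [CompleteSpace H]
    [NormedAddCommGroup E] [InnerProductSpace ℂ E] [FiniteDimensional ℂ E]
    (A Xinv : H →L[ℂ] H) (B : E →L[ℂ] H) (σ₁ : E →L[ℂ] E) (lam : ℂ) :
    E →L[ℂ] E :=
  1 - ((((adjoint B).comp Xinv).comp
    (Ring.inverse (lam • (1 : H →L[ℂ] H) - A))).comp B).comp σ₁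

theorem mid_aux {R : Type*} [Ring R] [Algebra ℂ R]
    (A A' X Xinv Rl Rm : R) (a b : ℂ)
    (hX1 : X * Xinv = 1) (hX2 : Xinv * X = 1)
    (hRl : (a • 1 - A) * Rl = 1)
    (hRm : Rm * (b • 1 - A') = 1) :
    Xinv * Rl + Rm * Xinv - Rm * Xinv * (-(A * X + X * A')) * Xinv * Rl
      = (b + a) • (Rm * (Xinv * Rl)) := by
  have h1 : Xinv * Rl = b • (Rm * (Xinv * Rl)) - Rm * (A' * (Xinv * Rl)) := by
    have : Xinv * Rl = Rm * ((b • 1 - A') * (Xinv * Rl)) := by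
      rw [← mul_assoc, hRm, one_mul]
    conv_lhs => rw [this]
    rw [sub_mul, smul_mul_assoc, one_mul, mul_sub, mul_smul_comm]
  have h2 : Rm * Xinv = a • (Rm * (Xinv * Rl)) - Rm * (Xinv * (A * Rl)) := by
    have : Rm * Xinv = Rm * (Xinv * ((a • 1 - A) * Rl)) := by rw [hRl, mul_one]
    conv_lhs => rw [this]
    rw [sub_mul, smul_mul_assoc, one_mul, mul_sub, mul_sub, mul_smul_comm,
      mul_smul_comm]
  have hmid : Rm * Xinv * (-(A * X + X * A')) * Xinv * Rl
      = -(Rm * (Xinv * (A * Rl)) + Rm * (A' * (Xinv * Rl))) := by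
    simp only [mul_neg, neg_mul, mul_add, add_mul, mul_assoc, hX2]
    rw [show X * (Xinv * Rl) = Rl from by rw [← mul_assoc, hX1, one_mul]]
    rw [show Xinv * (X * (A' * (Xinv * Rl))) = A' * (Xinv * Rl) from by
      rw [← mul_assoc, hX2, one_mul]]
  nth_rewrite 1 [h1]
  nth_rewrite 1 [h2]
  rw [hmid]
  module

theorem transfer_aux {H E : Type*}
    [NormedAddCommGroup H] [InnerProductSpace ℂ H] [CompleteSpace H]
    [NormedAddCommGroup E] [InnerProductSpace ℂ E] [FiniteDimensional ℂ E]
    (A X Xinv : H →L[ℂ] H) (B : E →L[ℂ] H) (σ₁ : E →L[ℂ] E)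
    (hXsa : IsSelfAdjoint X) (hX1 : X.comp Xinv = 1) (hX2 : Xinv.comp X = 1)
    (hσ₁sa : IsSelfAdjoint σ₁)
    (hLyap : A.comp X + X.comp (adjoint A) + (B.comp σ₁).comp (adjoint B) = 0)
    (lam mu : ℂ) (hl : IsUnit (lam • (1 : H →L[ℂ] H) - A))
    (hm : IsUnit (mu • (1 : H →L[ℂ] H) - A)) :
    (adjoint (transferFn A Xinv B σ₁ mu)).comp
        (σ₁.comp (transferFn A Xinv B σ₁ lam)) - σ₁ =
      (-((starRingEnd ℂ) mu + lam)) •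
        (σ₁.comp ((((adjoint B).comp
          (Ring.inverse ((starRingEnd ℂ mu) • (1 : H →L[ℂ] H) - adjoint A))).comp
          (Xinv.comp (Ring.inverse (lam • (1 : H →L[ℂ] H) - A)))).comp
          (B.comp σ₁))) := by
  have hσ_adj : adjoint σ₁ = σ₁ := hσ₁sa.adjoint_eq
  have hX_adj : adjoint X = X := hXsa.adjoint_eq
  have hXinv_adj : adjoint Xinv = Xinv := by
    have h := congrArg (adjoint (E := H) (F := H)) hX1
    rw [adjoint_comp, hX_adj] at h
    have h1 : adjoint (1 : H →L[ℂ] H) = 1 := by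
      rw [← star_eq_adjoint, star_one]
    rw [h1] at h
    calc adjoint Xinv = (adjoint Xinv).comp (X.comp Xinv) := by
          rw [hX1]; exact (mul_one _).symm
      _ = ((adjoint Xinv).comp X).comp Xinv := (comp_assoc _ _ _).symm
      _ = Xinv := by rw [h]; exact one_mul _
  have hadj_one : adjoint (1 : E →L[ℂ] E) = 1 := by rw [← star_eq_adjoint, star_one]
  have hstar : (starRingEnd ℂ mu) • (1 : H →L[ℂ] H) - adjoint A
      = star (mu • (1 : H →L[ℂ] H) - A) := by
    rw [star_sub, star_smul, star_one, ← star_eq_adjoint]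
    rfl
  have hm' : IsUnit ((starRingEnd ℂ mu) • (1 : H →L[ℂ] H) - adjoint A) := by
    rw [hstar]; exact hm.star
  have hRmstar : Ring.inverse ((starRingEnd ℂ mu) • (1 : H →L[ℂ] H) - adjoint A)
      = adjoint (Ring.inverse (mu • (1 : H →L[ℂ] H) - A)) := by
    rw [hstar, Ring.inverse_star, star_eq_adjoint]
  have hRl' : (lam • (1 : H →L[ℂ] H) - A) * Ring.inverse (lam • (1 : H →L[ℂ] H) - A) = 1 :=
    Ring.mul_inverse_cancel _ hl
  have hRm' : Ring.inverse ((starRingEnd ℂ mu) • (1 : H →L[ℂ] H) - adjoint A)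
      * ((starRingEnd ℂ mu) • (1 : H →L[ℂ] H) - adjoint A) = 1 :=
    Ring.inverse_mul_cancel _ hm'
  have hX1' : X * Xinv = 1 := hX1
  have hX2' : Xinv * X = 1 := hX2
  have hmid := mid_aux A (adjoint A) X Xinv
    (Ring.inverse (lam • (1 : H →L[ℂ] H) - A))
    (Ring.inverse ((starRingEnd ℂ mu) • (1 : H →L[ℂ] H) - adjoint A))
    lam (starRingEnd ℂ mu) hX1' hX2' hRl' hRm'
  have hQ2 : -(A.comp X + X.comp (adjoint A)) = (B.comp σ₁).comp (adjoint B) :=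
    (eq_neg_of_add_eq_zero_right hLyap).symm
  simp only [mul_def] at hmid
  rw [hQ2] at hmid
  have hconj := congrArg
    (fun M : H →L[ℂ] H => σ₁.comp ((adjoint B).comp (M.comp (B.comp σ₁)))) hmid
  simp only [comp_add, add_comp, comp_sub, sub_comp, smul_comp, comp_smul,
    comp_assoc] at hconj
  simp only [transferFn, map_sub, adjoint_comp, adjoint_adjoint, hσ_adj,
    hXinv_adj, hadj_one, ← hRmstar]
  have hco : ∀ f : E →L[ℂ] E, (1 : E →L[ℂ] E).comp f = f := fun f => one_mul f
  have hoc : ∀ f : E →L[ℂ] E, f.comp (1 : E →L[ℂ] E) = f := fun f => mul_one f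
  simp only [sub_comp, comp_sub, comp_add, add_comp, hco, hoc,
    comp_assoc, smul_comp, comp_smul, neg_smul]
  rw [← hconj]
  abel

/-- Under the Lyapunov equation `AX + XA* + Bσ₁B* = 0`, the transfer function
satisfies `S(μ)*σ₁S(λ) − σ₁ = −(μ̄+λ) σ₁B*(μ̄−A*)⁻¹X⁻¹(λ−A)⁻¹Bσ₁`; in
particular `S(−λ̄)* σ₁ S(λ) = σ₁`. -/
theorem transferFn_symmetry {H E : Type*}
    [NormedAddCommGroup H] [InnerProductSpace ℂ H] [CompleteSpace H]
    [NormedAddCommGroup E] [InnerProductSpace ℂ E] [FiniteDimensional ℂ E]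
    (A X Xinv : H →L[ℂ] H) (B : E →L[ℂ] H) (σ₁ : E →L[ℂ] E)
    (hXsa : IsSelfAdjoint X) (hX1 : X.comp Xinv = 1) (hX2 : Xinv.comp X = 1)
    (hσ₁sa : IsSelfAdjoint σ₁) (hσ₁ : IsUnit σ₁)
    (hLyap : A.comp X + X.comp (adjoint A) + (B.comp σ₁).comp (adjoint B) = 0) :
    (∀ lam mu : ℂ, IsUnit (lam • (1 : H →L[ℂ] H) - A) →
      IsUnit (mu • (1 : H →L[ℂ] H) - A) →
      (adjoint (transferFn A Xinv B σ₁ mu)).comp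
          (σ₁.comp (transferFn A Xinv B σ₁ lam)) - σ₁ =
        (-((starRingEnd ℂ) mu + lam)) •
          (σ₁.comp ((((adjoint B).comp
            (Ring.inverse ((starRingEnd ℂ mu) • (1 : H →L[ℂ] H) - adjoint A))).comp
            (Xinv.comp (Ring.inverse (lam • (1 : H →L[ℂ] H) - A)))).comp
            (B.comp σ₁)))) ∧
    (∀ lam : ℂ, IsUnit (lam • (1 : H →L[ℂ] H) - A) →
      IsUnit ((-(starRingEnd ℂ lam)) • (1 : H →L[ℂ] H) - A) →
      (adjoint (transferFn A Xinv B σ₁ (-(starRingEnd ℂ lam)))).comp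
        (σ₁.comp (transferFn A Xinv B σ₁ lam)) = σ₁) := by
  constructor
  · exact fun lam mu hl hm =>
      transfer_aux A X Xinv B σ₁ hXsa hX1 hX2 hσ₁sa hLyap lam mu hl hm
  · intro lam hl hm
    have h := transfer_aux A X Xinv B σ₁ hXsa hX1 hX2 hσ₁sa hLyap lam
      (-(starRingEnd ℂ lam)) hl hm
    have hc : (starRingEnd ℂ) (-(starRingEnd ℂ lam)) + lam = 0 := by
      simp
    rw [hc, neg_zero, zero_smul, sub_eq_zero] at h
    exact h
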